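/- Assume (H0) and d₁, d₂, l > 0, let k be a natural number, let ω > 0 satisfy the quartic equation ω⁴ + (A_k² − 2·B_k − b₁₁²)·ω² + B_k² − C_k² = 0, let j be a natural number, and set τ = (π − arcsin(S_k(ω)) + 2jπ)/ω. Then τ > 0 and λ = iω is a root of the characteristic equation λ² + A_k·λ + B_k + (−b₁₁·λ + C_k)·exp(−λτ) = 0. -/

import Mathlib

open Real

/-- Δ = M² − 4·K·(a·m + c·p)·(a·r₂ + c·d − c·r₀) with M = a·m + c·p + K·(a·r₂ + c·d). -/
noncomputable def Delta (r₀ r₂ K d a p c m : ℝ) : ℝ :=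
  (a*m + c*p + K*(a*r₂ + c*d))^2 - 4*K*(a*m + c*p)*(a*r₂ + c*d - c*r₀)

/-- The positive equilibrium predator density v⋆. -/
noncomputable def vstar (r₀ r₂ K d a p c m : ℝ) : ℝ :=
  (-(a*m + c*p + K*(a*r₂ + c*d)) + Real.sqrt (Delta r₀ r₂ K d a p c m)) / (2*K*(a*m + c*p))

/-- The positive equilibrium prey density u⋆ = (r₂ + m·v⋆)/c. -/
noncomputable def ustar (r₀ r₂ K d a p c m : ℝ) : ℝ := (r₂ + m * vstar r₀ r₂ K d a p c m) / c

/-- Linearization coefficient a₁₂. -/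
noncomputable def a12 (r₀ r₂ K d a p c m : ℝ) : ℝ :=
  -K*r₀*ustar r₀ r₂ K d a p c m / (1 + K*vstar r₀ r₂ K d a p c m)^2 - p*ustar r₀ r₂ K d a p c m

/-- Linearization coefficient a₂₁. -/
noncomputable def a21 (r₀ r₂ K d a p c m : ℝ) : ℝ := c * vstar r₀ r₂ K d a p c m

/-- Linearization coefficient a₂₂. -/
noncomputable def a22 (r₀ r₂ K d a p c m : ℝ) : ℝ := -m * vstar r₀ r₂ K d a p c m

/-- Linearization coefficient b₁₁. -/
noncomputable def b11 (r₀ r₂ K d a p c m : ℝ) : ℝ := -a * ustar r₀ r₂ K d a p c m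

/-- A_k = (d₁ + d₂)·k²/l² − a₂₂. -/
noncomputable def Ak (r₀ r₂ K d a p c m d₁ d₂ l : ℝ) (k : ℕ) : ℝ :=
  (d₁ + d₂)*(k:ℝ)^2/l^2 - a22 r₀ r₂ K d a p c m

/-- B_k = d₁·d₂·k⁴/l⁴ − a₂₂·d₁·k²/l² − a₁₂·a₂₁. -/
noncomputable def Bk (r₀ r₂ K d a p c m d₁ d₂ l : ℝ) (k : ℕ) : ℝ :=
  d₁*d₂*(k:ℝ)^4/l^4 - a22 r₀ r₂ K d a p c m * d₁*(k:ℝ)^2/l^2 - a12 r₀ r₂ K d a p c m * a21 r₀ r₂ K d a p c m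

/-- C_k = −b₁₁·d₂·k²/l² + a₂₂·b₁₁. -/
noncomputable def Ck (r₀ r₂ K d a p c m d₁ d₂ l : ℝ) (k : ℕ) : ℝ :=
  -(b11 r₀ r₂ K d a p c m)*d₂*(k:ℝ)^2/l^2 + a22 r₀ r₂ K d a p c m * b11 r₀ r₂ K d a p c m

/-- The characteristic equation at mode k with delay τ:
λ² + A_k·λ + B_k + (−b₁₁·λ + C_k)·exp(−λτ) = 0. -/
def charEq (r₀ r₂ K d a p c m d₁ d₂ l : ℝ) (k : ℕ) (τ : ℝ) (z : ℂ) : Prop :=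
  z^2 + (Ak r₀ r₂ K d a p c m d₁ d₂ l k : ℂ)*z + (Bk r₀ r₂ K d a p c m d₁ d₂ l k : ℂ)
    + (-(b11 r₀ r₂ K d a p c m : ℂ)*z + (Ck r₀ r₂ K d a p c m d₁ d₂ l k : ℂ)) * Complex.exp (-z*(τ:ℂ)) = 0

/-- Ĉ_k(ω) = (d₁·b₁₁·ω²·k²/l² − B_k·C_k)/(b₁₁²·ω² + C_k²). -/
noncomputable def Chat (r₀ r₂ K d a p c m d₁ d₂ l : ℝ) (k : ℕ) (ω : ℝ) : ℝ :=
  (d₁ * b11 r₀ r₂ K d a p c m * ω^2 * (k:ℝ)^2/l^2 - Bk r₀ r₂ K d a p c m d₁ d₂ l k * Ck r₀ r₂ K d a p c m d₁ d₂ l k) /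
    ((b11 r₀ r₂ K d a p c m)^2*ω^2 + (Ck r₀ r₂ K d a p c m d₁ d₂ l k)^2)

/-- S_k(ω) = (A_k·C_k·ω + B_k·b₁₁·ω − b₁₁·ω³)/(b₁₁²·ω² + C_k²). -/
noncomputable def Sk (r₀ r₂ K d a p c m d₁ d₂ l : ℝ) (k : ℕ) (ω : ℝ) : ℝ :=
  (Ak r₀ r₂ K d a p c m d₁ d₂ l k * Ck r₀ r₂ K d a p c m d₁ d₂ l k * ω + Bk r₀ r₂ K d a p c m d₁ d₂ l k * b11 r₀ r₂ K d a p c m * ω - b11 r₀ r₂ K d a p c m * ω^3) /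
    ((b11 r₀ r₂ K d a p c m)^2*ω^2 + (Ck r₀ r₂ K d a p c m d₁ d₂ l k)^2)


set_option maxHeartbeats 1000000 in
theorem aux13 (A B C b ω : ℝ) (hω : 0 < ω) (hC : 0 < C)
    (hnum : C*(ω^2 - B) + A*b*ω^2 ≤ 0)
    (hq : ω^4 + (A^2 - 2*B - b^2)*ω^2 + B^2 - C^2 = 0)
    (j : ℕ) (τ S : ℝ)
    (hS : S = (A*C*ω + B*b*ω - b*ω^3)/(b^2*ω^2 + C^2))
    (hτ : τ = (Real.pi - Real.arcsin S + 2*(j:ℝ)*Real.pi) / ω) :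
    0 < τ ∧ (Complex.I*(ω:ℂ))^2 + (A:ℂ)*(Complex.I*(ω:ℂ)) + (B:ℂ)
      + (-(b:ℂ)*(Complex.I*(ω:ℂ)) + (C:ℂ)) * Complex.exp (-(Complex.I*(ω:ℂ))*(τ:ℂ)) = 0 := by
  set D := b^2*ω^2 + C^2 with hDdef
  have hD : 0 < D := by
    have h1 := pow_pos hC 2
    have h2 : 0 ≤ b^2*ω^2 := by positivity
    linarith
  set Ch := (C*(ω^2 - B) + A*b*ω^2)/D with hChdef
  have hDq : D = A^2*ω^2 + (ω^2 - B)^2 := by rw [hDdef]; linear_combination -hq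
  have key : (A*C*ω + B*b*ω - b*ω^3)^2 + (C*(ω^2 - B) + A*b*ω^2)^2 = (b^2*ω^2 + C^2)^2 := by
    linear_combination (b^2*ω^2 + C^2)*hq
  have hsum : S^2 + Ch^2 = 1 := by
    rw [hS, hChdef, div_pow, div_pow, ← add_div, hDdef, key]
    exact div_self (ne_of_gt (by rw [← hDdef]; exact pow_pos hD 2))
  have hS2 : S^2 ≤ 1 := by nlinarith [sq_nonneg Ch]
  have hSle : S ≤ 1 := by nlinarith [sq_nonneg (S-1)]
  have hSge : -1 ≤ S := by nlinarith [sq_nonneg (S+1)]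
  have hChneg : Ch ≤ 0 := by
    rw [hChdef]
    exact div_nonpos_of_nonpos_of_nonneg hnum hD.le
  have hωτ : ω * τ = (Real.pi - Real.arcsin S) + (j:ℝ) * (2*Real.pi) := by
    rw [hτ, mul_div_cancel₀ _ hω.ne']; ring
  have hsin : Real.sin (ω*τ) = S := by
    rw [hωτ, Real.sin_add_nat_mul_two_pi, Real.sin_pi_sub, Real.sin_arcsin hSge hSle]
  have hsqrt : Real.sqrt (1 - S^2) = -Ch := by
    rw [show (1:ℝ) - S^2 = Ch^2 by linarith, Real.sqrt_sq_eq_abs, abs_of_nonpos hChneg]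
  have hcos : Real.cos (ω*τ) = Ch := by
    rw [hωτ, Real.cos_add_nat_mul_two_pi, Real.cos_pi_sub, Real.cos_arcsin, hsqrt]; ring
  have hτpos : 0 < τ := by
    rw [hτ]
    apply div_pos _ hω
    have h1 := Real.arcsin_le_pi_div_two S
    have h2 := Real.pi_pos
    have h3 : (0:ℝ) ≤ 2*(j:ℝ)*Real.pi := by positivity
    linarith
  refine ⟨hτpos, ?_⟩
  have hexp : Complex.exp (-(Complex.I*(ω:ℂ))*(τ:ℂ)) = (Ch : ℂ) - (S:ℂ)*Complex.I := by
    have h1 : -(Complex.I*(ω:ℂ))*(τ:ℂ) = ((-(ω*τ) : ℝ):ℂ) * Complex.I := by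
      push_cast; ring
    rw [h1, Complex.exp_mul_I, ← Complex.ofReal_cos, ← Complex.ofReal_sin,
      Real.cos_neg, Real.sin_neg, hcos, hsin]
    push_cast; ring
  have hre : -ω^2 + B + C*Ch - b*ω*S = 0 := by
    rw [hChdef, hS]; field_simp; ring
  have him : A*ω - b*ω*Ch - C*S = 0 := by
    rw [hChdef, hS]; field_simp; ring
  have hreC : ((-ω^2 + B + C*Ch - b*ω*S : ℝ) : ℂ) = 0 := by exact_mod_cast hre
  have himC : ((A*ω - b*ω*Ch - C*S : ℝ) : ℂ) = 0 := by exact_mod_cast him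
  push_cast at hreC himC
  rw [hexp]
  linear_combination hreC + Complex.I * himC + ((ω:ℂ)*(b:ℂ)*(S:ℂ) + (ω:ℂ)^2) * Complex.I_sq

set_option maxHeartbeats 1000000 in
theorem stmt13 (r₀ r₂ K d a p c m d₁ d₂ l : ℝ) (hr₀ : 0 < r₀) (hr₂ : 0 < r₂) (hK : 0 < K) (hd : 0 < d) (ha : 0 < a) (hp : 0 < p) (hc : 0 < c) (hm : 0 < m)
    (hd₁ : 0 < d₁) (hd₂ : 0 < d₂) (hl : 0 < l)
    (hH0 : a*r₂ + c*d - c*r₀ < 0) (k : ℕ) (ω : ℝ) (hω : 0 < ω)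
    (hq : ω^4 + ((Ak r₀ r₂ K d a p c m d₁ d₂ l k)^2 - 2*Bk r₀ r₂ K d a p c m d₁ d₂ l k - (b11 r₀ r₂ K d a p c m)^2)*ω^2
      + (Bk r₀ r₂ K d a p c m d₁ d₂ l k)^2 - (Ck r₀ r₂ K d a p c m d₁ d₂ l k)^2 = 0)
    (j : ℕ) (τ : ℝ)
    (hτ : τ = (Real.pi - Real.arcsin (Sk r₀ r₂ K d a p c m d₁ d₂ l k ω) + 2*(j:ℝ)*Real.pi) / ω) :
    0 < τ ∧ charEq r₀ r₂ K d a p c m d₁ d₂ l k τ (Complex.I * (ω : ℂ)) := by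
  have hMpos : 0 < a*m + c*p + K*(a*r₂ + c*d) := by positivity
  have hΔ : (a*m + c*p + K*(a*r₂ + c*d))^2 < Delta r₀ r₂ K d a p c m := by
    have h4 : 4*K*(a*m+c*p)*(a*r₂+c*d-c*r₀) < 0 :=
      mul_neg_of_pos_of_neg (by positivity) hH0
    simp only [Delta]; linarith
  have hv : 0 < vstar r₀ r₂ K d a p c m := by
    rw [vstar]
    apply div_pos _ (by positivity)
    have hlt : a*m + c*p + K*(a*r₂ + c*d) < Real.sqrt (Delta r₀ r₂ K d a p c m) :=
      (Real.lt_sqrt hMpos.le).mpr hΔ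
    linarith
  have hu : 0 < ustar r₀ r₂ K d a p c m := by
    rw [ustar]
    apply div_pos _ hc
    nlinarith [mul_pos hm hv]
  have hb : b11 r₀ r₂ K d a p c m < 0 := by
    rw [b11]; nlinarith [mul_pos ha hu]
  have ha22 : a22 r₀ r₂ K d a p c m < 0 := by
    rw [a22]; nlinarith [mul_pos hm hv]
  have ha21 : 0 < a21 r₀ r₂ K d a p c m := by
    rw [a21]; exact mul_pos hc hv
  have ha12 : a12 r₀ r₂ K d a p c m < 0 := by
    rw [a12]
    have h1 : 0 < K*r₀*ustar r₀ r₂ K d a p c m / (1 + K*vstar r₀ r₂ K d a p c m)^2 := by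
      apply div_pos
      · nlinarith [mul_pos (mul_pos hK hr₀) hu]
      · have h2 : 0 < 1 + K*vstar r₀ r₂ K d a p c m := by nlinarith [mul_pos hK hv]
        exact pow_pos h2 2
    have h2 : -K*r₀*ustar r₀ r₂ K d a p c m / (1 + K*vstar r₀ r₂ K d a p c m)^2
        = -(K*r₀*ustar r₀ r₂ K d a p c m / (1 + K*vstar r₀ r₂ K d a p c m)^2) := by ring
    rw [h2]
    linarith [mul_pos hp hu]
  have hk2 : (0:ℝ) ≤ (k:ℝ)^2 := by positivity
  have hB : 0 < Bk r₀ r₂ K d a p c m d₁ d₂ l k := by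
    rw [Bk]
    have e1 : 0 ≤ d₁*d₂*(k:ℝ)^4/l^4 := by positivity
    have e2 : a22 r₀ r₂ K d a p c m * d₁*(k:ℝ)^2/l^2 ≤ 0 := by
      apply div_nonpos_of_nonpos_of_nonneg _ (by positivity)
      nlinarith [mul_nonneg (mul_nonneg (neg_nonneg.2 ha22.le) hd₁.le) hk2]
    nlinarith [mul_pos_of_neg_of_neg ha12 (neg_neg_iff_pos.mpr ha21)]
  have hC : 0 < Ck r₀ r₂ K d a p c m d₁ d₂ l k := by
    rw [Ck]
    have e1 : 0 ≤ -(b11 r₀ r₂ K d a p c m)*d₂*(k:ℝ)^2/l^2 := by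
      apply div_nonneg _ (by positivity)
      nlinarith [mul_nonneg (mul_nonneg (neg_nonneg.2 hb.le) hd₂.le) hk2]
    nlinarith [mul_pos_of_neg_of_neg ha22 hb]
  have hnum : Ck r₀ r₂ K d a p c m d₁ d₂ l k * (ω^2 - Bk r₀ r₂ K d a p c m d₁ d₂ l k)
      + Ak r₀ r₂ K d a p c m d₁ d₂ l k * b11 r₀ r₂ K d a p c m * ω^2 ≤ 0 := by
    have hid : Ck r₀ r₂ K d a p c m d₁ d₂ l k * (ω^2 - Bk r₀ r₂ K d a p c m d₁ d₂ l k)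
        + Ak r₀ r₂ K d a p c m d₁ d₂ l k * b11 r₀ r₂ K d a p c m * ω^2
        = d₁*(b11 r₀ r₂ K d a p c m)*ω^2*(k:ℝ)^2/l^2
          - Bk r₀ r₂ K d a p c m d₁ d₂ l k * Ck r₀ r₂ K d a p c m d₁ d₂ l k := by
      simp only [Ak, Ck]; ring
    rw [hid]
    have e1 : d₁*(b11 r₀ r₂ K d a p c m)*ω^2*(k:ℝ)^2/l^2 ≤ 0 := by
      apply div_nonpos_of_nonpos_of_nonneg _ (by positivity)
      nlinarith [mul_nonneg (mul_nonneg (mul_nonneg hd₁.le (neg_nonneg.2 hb.le)) (sq_nonneg ω)) hk2]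
    nlinarith [mul_pos hB hC]
  have hSval : Sk r₀ r₂ K d a p c m d₁ d₂ l k ω
      = (Ak r₀ r₂ K d a p c m d₁ d₂ l k * Ck r₀ r₂ K d a p c m d₁ d₂ l k * ω
          + Bk r₀ r₂ K d a p c m d₁ d₂ l k * b11 r₀ r₂ K d a p c m * ω
          - b11 r₀ r₂ K d a p c m * ω^3)
        / ((b11 r₀ r₂ K d a p c m)^2*ω^2 + (Ck r₀ r₂ K d a p c m d₁ d₂ l k)^2) := rfl
  have H := aux13 (Ak r₀ r₂ K d a p c m d₁ d₂ l k) (Bk r₀ r₂ K d a p c m d₁ d₂ l k)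
    (Ck r₀ r₂ K d a p c m d₁ d₂ l k) (b11 r₀ r₂ K d a p c m) ω hω hC hnum hq j τ
    (Sk r₀ r₂ K d a p c m d₁ d₂ l k ω) hSval hτ
  exact ⟨H.1, H.2⟩
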